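/- Let p be a prime with p ≡ 3 (mod 8). Then Σ_{c=1}^{p} (p/(4c−1)) · c² ≡ 1 (mod 2), where (p/(4c−1)) denotes the Jacobi symbol with numerator p and odd positive denominator 4c−1. -/
import Mathlib


/-- For a prime `p ≡ 3 (mod 8)`, `∑_{c=1}^{p} (p/(4c-1)) c² ≡ 1 (mod 2)`, where `(p/(4c-1))`
is the Jacobi symbol with numerator `p` and odd positive denominator `4c - 1`. -/
theorem stmt4 (p : ℕ) (hp : p.Prime) (hmod : p % 8 = 3) :
    (∑ c ∈ Finset.Icc 1 p, jacobiSym p (4 * c - 1) * (c : ℤ) ^ 2) ≡ 1 [ZMOD 2] := by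
  refine (ZMod.intCast_eq_intCast_iff _ 1 2).mp ?_
  push_cast
  set c₀ : ℕ := (p + 1) / 4 with hc₀
  have hc₀mem : c₀ ∈ Finset.Icc 1 p := by simp only [Finset.mem_Icc]; omega
  have hpc₀ : 4 * c₀ - 1 = p := by omega
  have hsq : ∀ x : ZMod 2, x ^ 2 = x := by decide
  have hneg : ∀ x : ZMod 2, -x = x := by decide
  have key : ∀ c ∈ Finset.Icc 1 p,
      ((jacobiSym (p : ℤ) (4 * c - 1) : ZMod 2) * (c : ZMod 2) ^ 2)
        = (c : ZMod 2) - (if c = c₀ then (c₀ : ZMod 2) else 0) := by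
    intro c hc
    simp only [Finset.mem_Icc] at hc
    by_cases h : c = c₀
    · subst h
      rw [if_pos rfl, hpc₀]
      have hz : jacobiSym (p : ℤ) p = 0 := by
        rw [jacobiSym.eq_zero_iff]
        refine ⟨by omega, ?_⟩
        rw [Int.gcd_natCast_natCast, Nat.gcd_self]
        omega
      rw [hz]
      push_cast
      ring
    · rw [if_neg h]
      have hndvd : ¬ (p ∣ 4 * c - 1) := by
        rintro ⟨k, hk⟩
        have hk4 : k < 4 := by
          by_contra hge
          have := Nat.mul_le_mul_left p (show 4 ≤ k by omega)
          omega
        interval_cases k <;> omega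
      have hcop : Int.gcd (p : ℤ) ((4 * c - 1 : ℕ) : ℤ) = 1 := by
        rw [Int.gcd_natCast_natCast]
        exact (Nat.Prime.coprime_iff_not_dvd hp).mpr hndvd
      rcases jacobiSym.eq_one_or_neg_one hcop with h1 | h1 <;>
        rw [h1] <;> push_cast <;> rw [hsq] <;> ring_nf <;>
          simp [hneg]
  rw [Finset.sum_congr rfl key, Finset.sum_sub_distrib,
    Finset.sum_ite_eq' (Finset.Icc 1 p) c₀ (fun _ => (c₀ : ZMod 2)), if_pos hc₀mem]
  have hS : (∑ c ∈ Finset.Icc 1 p, (c : ZMod 2)) = 0 := by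
    rw [← Nat.cast_sum]
    rw [ZMod.natCast_eq_zero_iff]
    have h2 : (∑ i ∈ Finset.range (p + 1), i) * 2 = (p + 1) * p :=
      Finset.sum_range_id_mul_two (p + 1)
    have he : (∑ c ∈ Finset.Icc 1 p, c) = ∑ i ∈ Finset.range (p + 1), i := by
      rw [Finset.range_eq_Ico, ← Finset.Ico_add_one_right_eq_Icc]
      rw [Finset.sum_Ico_eq_sum_range, Finset.sum_Ico_eq_sum_range]
      simp only [Nat.succ_sub_one, Nat.sub_zero, Nat.zero_add, zero_add]
      rw [Finset.sum_range_succ']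
      simp [add_comm]
    obtain ⟨t, ht⟩ : ∃ t, p + 1 = 4 * t := ⟨(p + 1) / 4, by omega⟩
    rw [he]
    have : (∑ i ∈ Finset.range (p + 1), i) * 2 = 4 * (t * p) := by
      rw [h2, ht]; ring
    omega
  rw [hS]
  have hc₀odd : c₀ % 2 = 1 := by omega
  rw [← ZMod.natCast_mod c₀ 2, hc₀odd]
  push_cast
  rw [zero_sub, hneg]
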